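/- For every non-degenerate model with small steps and zero drift and every function g : V° → ℂ, there exists a function f : V → ℂ vanishing on ∂V such that Δf(i,j) = g(i,j) for all (i,j) ∈ V°. In particular, for every n ≥ 1 and every discrete polyharmonic function h of degree n there exists a discrete polyharmonic function f of degree n+1 with Δ̃f = h; i.e. the map Δ̃ : ℋ_{n+1} → ℋ_n is surjective. -/

import Mathlib

open Finset

/-- The set of possible small steps `{-1,0,1} × {-1,0,1}` (the step `(0,0)` is excluded
via the support condition of the model). -/
def SmallStepGrid : Finset (ℤ × ℤ) := ({-1, 0, 1} : Finset ℤ) ×ˢ ({-1, 0, 1} : Finset ℤ)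

/-- A model with small steps: nonnegative weights `p i j` supported on
`{-1,0,1}² \ {(0,0)}` summing to `1`. -/
structure SmallStepModel where
  p : ℤ → ℤ → ℝ
  nonneg : ∀ u v, 0 ≤ p u v
  supp : ∀ u v, p u v ≠ 0 → ((u, v) ∈ SmallStepGrid ∧ (u, v) ≠ (0, 0))
  sum_one : ∑ uv ∈ SmallStepGrid, p uv.1 uv.2 = 1

/-- Zero drift: both coordinates of the mean step vanish. -/
def SmallStepModel.ZeroDrift (M : SmallStepModel) : Prop :=
  (∑ uv ∈ SmallStepGrid, (uv.1 : ℝ) * M.p uv.1 uv.2 = 0) ∧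
  (∑ uv ∈ SmallStepGrid, (uv.2 : ℝ) * M.p uv.1 uv.2 = 0)

/-- The cyclic list of the eight boundary weights. -/
def SmallStepModel.cyc (M : SmallStepModel) : Fin 8 → ℝ :=
  ![M.p 1 1, M.p 1 0, M.p 1 (-1), M.p 0 (-1), M.p (-1) (-1), M.p (-1) 0, M.p (-1) 1,
    M.p 0 1]

/-- Non-degeneracy: the cyclic list of the eight weights contains no
three consecutive zeros. -/
def SmallStepModel.NonDegenerate (M : SmallStepModel) : Prop :=
  ∀ k : Fin 8, ¬(M.cyc k = 0 ∧ M.cyc (k + 1) = 0 ∧ M.cyc (k + 2) = 0)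


/-- The discrete Laplacian `Δ̃` on complex-valued functions on `ℤ²` (the quarter plane
`V = ℤ_{≥0}²` with interior `V° = {i ≥ 1, j ≥ 1}`): on `V°`,
`Δ̃f(i,j) = Σ_{(u,v)} p_{u,v} f(i+u, j+v) − f(i,j)`, and `Δ̃f = 0` off `V°`. -/
noncomputable def lapC (M : SmallStepModel) (f : ℤ × ℤ → ℂ) : ℤ × ℤ → ℂ :=
  fun z =>
    if 1 ≤ z.1 ∧ 1 ≤ z.2 then
      (∑ uv ∈ SmallStepGrid, (M.p uv.1 uv.2 : ℂ) * f (z.1 + uv.1, z.2 + uv.2)) - f z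
    else 0

/-- `f` vanishes on the boundary of the quarter plane (and outside it). -/
def BoundaryVanishing (f : ℤ × ℤ → ℂ) : Prop :=
  ∀ z : ℤ × ℤ, ¬(1 ≤ z.1 ∧ 1 ≤ z.2) → f z = 0

/-- `f ∈ ℋ_n`: `f` vanishes on the boundary and `Δ̃ⁿ f = 0`. -/
def IsPolyharmonic (M : SmallStepModel) (n : ℕ) (f : ℤ × ℤ → ℂ) : Prop :=
  BoundaryVanishing f ∧ (lapC M)^[n] f = 0


lemma sum9 {α : Type*} [AddCommMonoid α] (F : ℤ × ℤ → α) :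
    ∑ uv ∈ SmallStepGrid, F uv =
      F (-1,-1) + F (-1,0) + F (-1,1) + F (0,-1) + F (0,0) + F (0,1)
        + F (1,-1) + F (1,0) + F (1,1) := by
  simp [SmallStepGrid, Finset.sum_product, Finset.sum_insert, Finset.mem_insert]
  abel

/-- Solver when `p 1 1 ≠ 0`: `f (i+1, j+1)` is determined by the Laplacian
equation at `(i, j)`; `f` vanishes whenever `z.1 ≤ 1` or `z.2 ≤ 1`. -/
noncomputable def solA1 (M : SmallStepModel) (g : ℤ × ℤ → ℂ) : ℤ × ℤ → ℂ := fun z =>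
  if _h : 2 ≤ z.1 ∧ 2 ≤ z.2 then
    (g (z.1 - 1, z.2 - 1) + solA1 M g (z.1 - 1, z.2 - 1)
      - ((M.p (-1) (-1) : ℂ) * solA1 M g (z.1 - 2, z.2 - 2)
       + (M.p (-1) 0 : ℂ) * solA1 M g (z.1 - 2, z.2 - 1)
       + (M.p (-1) 1 : ℂ) * solA1 M g (z.1 - 2, z.2)
       + (M.p 0 (-1) : ℂ) * solA1 M g (z.1 - 1, z.2 - 2)
       + (M.p 0 1 : ℂ) * solA1 M g (z.1 - 1, z.2)
       + (M.p 1 (-1) : ℂ) * solA1 M g (z.1, z.2 - 2)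
       + (M.p 1 0 : ℂ) * solA1 M g (z.1, z.2 - 1))) / (M.p 1 1 : ℂ)
  else 0
termination_by z => (z.1.toNat, z.2.toNat)
decreasing_by
  all_goals first
    | exact Prod.Lex.left _ _ (by omega)
    | exact Prod.Lex.right _ (by omega)

lemma solA1_bv (M : SmallStepModel) (g : ℤ × ℤ → ℂ) : BoundaryVanishing (solA1 M g) := by
  intro z hz
  rw [solA1, dif_neg (by omega)]

lemma solA1_spec (M : SmallStepModel) (hp : M.p 1 1 ≠ 0) (g : ℤ × ℤ → ℂ) :
    ∀ i j : ℤ, 1 ≤ i → 1 ≤ j →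
      (∑ uv ∈ SmallStepGrid, (M.p uv.1 uv.2 : ℂ) * solA1 M g (i + uv.1, j + uv.2))
        - solA1 M g (i, j) = g (i, j) := by
  intro i j hi hj
  have h00 : M.p 0 0 = 0 := by
    by_contra h; exact (M.supp 0 0 h).2 rfl
  have hp' : (M.p 1 1 : ℂ) ≠ 0 := by exact_mod_cast hp
  rw [sum9]
  have key : solA1 M g (i + 1, j + 1) =
    (g (i + 1 - 1, j + 1 - 1) + solA1 M g (i + 1 - 1, j + 1 - 1)
      - ((M.p (-1) (-1) : ℂ) * solA1 M g (i + 1 - 2, j + 1 - 2)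
       + (M.p (-1) 0 : ℂ) * solA1 M g (i + 1 - 2, j + 1 - 1)
       + (M.p (-1) 1 : ℂ) * solA1 M g (i + 1 - 2, j + 1)
       + (M.p 0 (-1) : ℂ) * solA1 M g (i + 1 - 1, j + 1 - 2)
       + (M.p 0 1 : ℂ) * solA1 M g (i + 1 - 1, j + 1)
       + (M.p 1 (-1) : ℂ) * solA1 M g (i + 1, j + 1 - 2)
       + (M.p 1 0 : ℂ) * solA1 M g (i + 1, j + 1 - 1))) / (M.p 1 1 : ℂ) := by
    rw [solA1]
    rw [dif_pos (show 2 ≤ (i+1, j+1).1 ∧ 2 ≤ (i+1, j+1).2 from ⟨by omega, by omega⟩)]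
  have e1 : i + 1 - 1 = i := by ring
  have e2 : j + 1 - 1 = j := by ring
  have e3 : i + 1 - 2 = i + -1 := by ring
  have e4 : j + 1 - 2 = j + -1 := by ring
  have e5 : i + (0:ℤ) = i := by ring
  have e6 : j + (0:ℤ) = j := by ring
  rw [e1, e2, e3, e4] at key
  rw [e5, e6]
  rw [key, h00]
  push_cast
  field_simp
  ring

/-- Solver when `p 1 1 = 0` and `p 1 0 ≠ 0`: `f (i+1, j)` is determined by the
Laplacian equation at `(i, j)`. -/
noncomputable def solA2 (M : SmallStepModel) (g : ℤ × ℤ → ℂ) : ℤ × ℤ → ℂ := fun z =>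
  if _h : 2 ≤ z.1 ∧ 1 ≤ z.2 then
    (g (z.1 - 1, z.2) + solA2 M g (z.1 - 1, z.2)
      - ((M.p (-1) (-1) : ℂ) * solA2 M g (z.1 - 2, z.2 - 1)
       + (M.p (-1) 0 : ℂ) * solA2 M g (z.1 - 2, z.2)
       + (M.p (-1) 1 : ℂ) * solA2 M g (z.1 - 2, z.2 + 1)
       + (M.p 0 (-1) : ℂ) * solA2 M g (z.1 - 1, z.2 - 1)
       + (M.p 0 1 : ℂ) * solA2 M g (z.1 - 1, z.2 + 1)
       + (M.p 1 (-1) : ℂ) * solA2 M g (z.1, z.2 - 1))) / (M.p 1 0 : ℂ)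
  else 0
termination_by z => (z.1.toNat, z.2.toNat)
decreasing_by
  all_goals first
    | exact Prod.Lex.left _ _ (by omega)
    | exact Prod.Lex.right _ (by omega)

lemma solA2_spec (M : SmallStepModel) (h11 : M.p 1 1 = 0) (hp : M.p 1 0 ≠ 0)
    (g : ℤ × ℤ → ℂ) :
    ∀ i j : ℤ, 1 ≤ i → 1 ≤ j →
      (∑ uv ∈ SmallStepGrid, (M.p uv.1 uv.2 : ℂ) * solA2 M g (i + uv.1, j + uv.2))
        - solA2 M g (i, j) = g (i, j) := by
  intro i j hi hj
  have h00 : M.p 0 0 = 0 := by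
    by_contra h; exact (M.supp 0 0 h).2 rfl
  have hp' : (M.p 1 0 : ℂ) ≠ 0 := by exact_mod_cast hp
  rw [sum9]
  have key : solA2 M g (i + 1, j) =
    (g (i + 1 - 1, j) + solA2 M g (i + 1 - 1, j)
      - ((M.p (-1) (-1) : ℂ) * solA2 M g (i + 1 - 2, j - 1)
       + (M.p (-1) 0 : ℂ) * solA2 M g (i + 1 - 2, j)
       + (M.p (-1) 1 : ℂ) * solA2 M g (i + 1 - 2, j + 1)
       + (M.p 0 (-1) : ℂ) * solA2 M g (i + 1 - 1, j - 1)
       + (M.p 0 1 : ℂ) * solA2 M g (i + 1 - 1, j + 1)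
       + (M.p 1 (-1) : ℂ) * solA2 M g (i + 1, j - 1))) / (M.p 1 0 : ℂ) := by
    rw [solA2]
    rw [dif_pos (show 2 ≤ (i+1, j).1 ∧ 1 ≤ (i+1, j).2 from ⟨by omega, by omega⟩)]
  have e1 : i + 1 - 1 = i := by ring
  have e3 : i + 1 - 2 = i + -1 := by ring
  have e4 : j - 1 = j + -1 := by ring
  have e5 : i + (0:ℤ) = i := by ring
  have e6 : j + (0:ℤ) = j := by ring
  rw [e1, e3, e4] at key
  rw [e5, e6]
  rw [key, h00, h11]
  push_cast
  field_simp
  ring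

/-- The transposed model, exchanging the two coordinates. -/
noncomputable def transposeModel (M : SmallStepModel) : SmallStepModel where
  p u v := M.p v u
  nonneg u v := M.nonneg v u
  supp u v h := by
    obtain ⟨h1, h2⟩ := M.supp v u h
    refine ⟨?_, ?_⟩
    · simp only [SmallStepGrid, Finset.mem_product] at h1 ⊢
      exact ⟨h1.2, h1.1⟩
    · intro hc
      apply h2
      rw [Prod.mk.injEq] at hc ⊢
      exact ⟨hc.2, hc.1⟩
  sum_one := by
    have := M.sum_one
    rw [sum9] at this ⊢
    linarith


/-- For every non-degenerate model with small steps and zero drift, every function `g` on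
the interior `V°` of the quarter plane admits a preimage under the discrete Laplacian
vanishing on `∂V`; in particular `Δ̃ : ℋ_{n+1} → ℋ_n` is surjective for every `n ≥ 1`. -/
theorem laplacian_surjective (M : SmallStepModel)
    (hnd : M.NonDegenerate) (hzd : M.ZeroDrift) :
    (∀ g : ℤ × ℤ → ℂ, ∃ f : ℤ × ℤ → ℂ, BoundaryVanishing f ∧
      ∀ i j : ℤ, 1 ≤ i → 1 ≤ j →
        (∑ uv ∈ SmallStepGrid, (M.p uv.1 uv.2 : ℂ) * f (i + uv.1, j + uv.2)) - f (i, j)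
          = g (i, j)) ∧
    (∀ n : ℕ, 1 ≤ n → ∀ h : ℤ × ℤ → ℂ, IsPolyharmonic M n h →
      ∃ f : ℤ × ℤ → ℂ, IsPolyharmonic M (n + 1) f ∧ lapC M f = h) := by
  have h00 : M.p 0 0 = 0 := by
    by_contra h; exact (M.supp 0 0 h).2 rfl
  have main : ∀ g : ℤ × ℤ → ℂ, ∃ f : ℤ × ℤ → ℂ, BoundaryVanishing f ∧
      ∀ i j : ℤ, 1 ≤ i → 1 ≤ j →
        (∑ uv ∈ SmallStepGrid, (M.p uv.1 uv.2 : ℂ) * f (i + uv.1, j + uv.2)) - f (i, j)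
          = g (i, j) := by
    intro g
    by_cases h11 : M.p 1 1 = 0
    · by_cases h10 : M.p 1 0 = 0
      · -- case B : `p 0 1 ≠ 0` by non-degeneracy; use the transposed model
        have h01 : M.p 0 1 ≠ 0 := by
          intro h01
          have h7 := hnd 7
          have e1 : ((7:Fin 8) + 1) = 0 := by decide
          have e2 : ((7:Fin 8) + 2) = 1 := by decide
          rw [e1, e2] at h7
          simp [SmallStepModel.cyc] at h7
          exact h7 h01 h11 h10
        have h11' : (transposeModel M).p 1 1 = 0 := h11
        have h10' : (transposeModel M).p 1 0 ≠ 0 := h01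
        refine ⟨fun z => solA2 (transposeModel M) (fun w => g (w.2, w.1)) (z.2, z.1),
          ?_, ?_⟩
        · intro z hz
          show solA2 (transposeModel M) (fun w => g (w.2, w.1)) (z.2, z.1) = 0
          rw [solA2, dif_neg (show ¬(2 ≤ (z.2, z.1).1 ∧ 1 ≤ (z.2, z.1).2) by
            dsimp only; omega)]
        · intro i j hi hj
          have spec := solA2_spec (transposeModel M) h11' h10'
            (fun w => g (w.2, w.1)) j i hj hi
          have hMt : ∀ u v : ℤ, (transposeModel M).p u v = M.p v u := fun _ _ => rfl
          rw [sum9] at spec ⊢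
          simp only [hMt] at spec
          dsimp only at spec ⊢
          linear_combination spec
      · refine ⟨solA2 M g, ?_, solA2_spec M h11 h10 g⟩
        intro z hz
        rw [solA2, dif_neg (show ¬(2 ≤ z.1 ∧ 1 ≤ z.2) by omega)]
    · exact ⟨solA1 M g, solA1_bv M g, solA1_spec M h11 g⟩
  refine ⟨main, ?_⟩
  intro n hn h hh
  obtain ⟨f, hfb, hfe⟩ := main h
  have hlap : lapC M f = h := by
    funext z
    rw [lapC]
    by_cases hz : 1 ≤ z.1 ∧ 1 ≤ z.2
    · rw [if_pos hz]
      have := hfe z.1 z.2 hz.1 hz.2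
      simpa using this
    · rw [if_neg hz, (hh.1 z hz).symm]
  exact ⟨f, ⟨hfb, by rw [Function.iterate_succ_apply, hlap, hh.2]⟩, hlap⟩
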